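/- arXiv:1209.2045 — 2 statements merged into one kernel-verified Lean document; each statement's English description precedes it below -/
import Mathlib

section
/- Let a,b>0 and let (γ,δ)∈ℝ² satisfy γ ≥ −2/a, δ ≤ 2/b and γ−δ ≤ 2. Then the unique smooth solution (u,v) on ℂ∖{0} of the system Δu = 4(e^{au} − e^{v−u}), Δv = 4(e^{v−u} − e^{−bv}) with asymptotic data (γ,δ) is radial: u(z) = u(z') and v(z) = v(z') whenever |z| = |z'|, i.e. u and v depend only on |z|. -/
open Filter

/-- The Euclidean Laplacian of `f : ℂ → ℝ`, viewing `ℂ ≅ ℝ²` with orthonormal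
directions `1` and `I`. -/
noncomputable def lap (f : ℂ → ℝ) (z : ℂ) : ℝ :=
  iteratedFDeriv ℝ 2 f z ![1, 1] + iteratedFDeriv ℝ 2 f z ![Complex.I, Complex.I]

/-- `f` is smooth on `ℂ ∖ {0}`. -/
def SmoothOffZero (f : ℂ → ℝ) : Prop := ContDiffOn ℝ (⊤ : ℕ∞) f {(0 : ℂ)}ᶜ

/-- `f z → 0` as `|z| → ∞`. -/
def TendstoZeroAtInfty (f : ℂ → ℝ) : Prop :=
  Tendsto f (comap (fun z : ℂ => ‖z‖) atTop) (nhds 0)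

/-- `f z / log |z| → γ` as `z → 0`. -/
def LogAsymAtZero (γ : ℝ) (f : ℂ → ℝ) : Prop :=
  Tendsto (fun z : ℂ => f z / Real.log ‖z‖) (nhdsWithin 0 {(0 : ℂ)}ᶜ) (nhds γ)

/-- `(u, v)` is a smooth solution on `ℂ ∖ {0}` of the two-function tt*-Toda system
`Δu = 4(e^{au} − e^{v−u})`, `Δv = 4(e^{v−u} − e^{−bv})`. -/
def IsTodaSol (a b : ℝ) (u v : ℂ → ℝ) : Prop :=
  SmoothOffZero u ∧ SmoothOffZero v ∧
  ∀ z : ℂ, z ≠ 0 →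
    lap u z = 4 * (Real.exp (a * u z) - Real.exp (v z - u z)) ∧
    lap v z = 4 * (Real.exp (v z - u z) - Real.exp (-(b * v z)))

/-- `(u, v)` has asymptotic data `(γ, δ)`: `u, v → 0` at `∞` and
`u(z)/log|z| → γ`, `v(z)/log|z| → δ` at `0`. -/
def HasAsymData (γ δ : ℝ) (u v : ℂ → ℝ) : Prop :=
  TendstoZeroAtInfty u ∧ TendstoZeroAtInfty v ∧ LogAsymAtZero γ u ∧ LogAsymAtZero δ v



open Topology

lemma lap_eq (f : ℂ → ℝ) (z : ℂ) :
    lap f z = fderiv ℝ (fderiv ℝ f) z 1 1 + fderiv ℝ (fderiv ℝ f) z Complex.I Complex.I := by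
  simp [lap, iteratedFDeriv_two_apply]

section basic
variable {f g : ℂ → ℝ} {U : Set ℂ} {z : ℂ}

lemma diffAt_of_smoothOn (hU : IsOpen U) (hf : ContDiffOn ℝ (⊤ : ℕ∞) f U) (hz : z ∈ U) :
    DifferentiableAt ℝ f z :=
  (hf.contDiffAt (hU.mem_nhds hz)).differentiableAt (by simp)

lemma diffAt_fderiv_of_smoothOn (hU : IsOpen U) (hf : ContDiffOn ℝ (⊤ : ℕ∞) f U) (hz : z ∈ U) :
    DifferentiableAt ℝ (fderiv ℝ f) z :=
  ((hf.contDiffAt (hU.mem_nhds hz)).fderiv_right (m := (⊤:ℕ∞)) (by exact_mod_cast le_top)).differentiableAt (by simp)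

lemma lap_add (hU : IsOpen U) (hf : ContDiffOn ℝ (⊤ : ℕ∞) f U) (hg : ContDiffOn ℝ (⊤ : ℕ∞) g U) (hz : z ∈ U) :
    lap (fun w => f w + g w) z = lap f z + lap g z := by
  have h1 : (fun w => fderiv ℝ (fun x => f x + g x) w) =ᶠ[𝓝 z]
      (fun w => fderiv ℝ f w + fderiv ℝ g w) := by
    filter_upwards [hU.mem_nhds hz] with w hw
    exact fderiv_add (diffAt_of_smoothOn hU hf hw) (diffAt_of_smoothOn hU hg hw)
  have h2 : fderiv ℝ (fderiv ℝ (fun x => f x + g x)) z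
      = fderiv ℝ (fderiv ℝ f) z + fderiv ℝ (fderiv ℝ g) z := by
    rw [h1.fderiv_eq]
    exact fderiv_add (diffAt_fderiv_of_smoothOn hU hf hz) (diffAt_fderiv_of_smoothOn hU hg hz)
  simp [lap_eq, h2]; ring

lemma lap_const_mul (hU : IsOpen U) (hf : ContDiffOn ℝ (⊤ : ℕ∞) f U) (hz : z ∈ U) (c : ℝ) :
    lap (fun w => c * f w) z = c * lap f z := by
  have h1 : (fun w => fderiv ℝ (fun x => c * f x) w) =ᶠ[𝓝 z]
      (fun w => c • fderiv ℝ f w) := by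
    filter_upwards [hU.mem_nhds hz] with w hw
    exact fderiv_const_mul (diffAt_of_smoothOn hU hf hw) c
  have h2 : fderiv ℝ (fderiv ℝ (fun x => c * f x)) z
      = c • fderiv ℝ (fderiv ℝ f) z := by
    rw [h1.fderiv_eq]
    exact fderiv_const_smul (diffAt_fderiv_of_smoothOn hU hf hz) c
  simp [lap_eq, h2]; ring

lemma lap_sub (hU : IsOpen U) (hf : ContDiffOn ℝ (⊤ : ℕ∞) f U) (hg : ContDiffOn ℝ (⊤ : ℕ∞) g U) (hz : z ∈ U) :
    lap (fun w => f w - g w) z = lap f z - lap g z := by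
  have : (fun w => f w - g w) = (fun w => f w + (-1 : ℝ) * g w) := by ext w; ring
  rw [this, lap_add hU hf (by exact (contDiffOn_const (c := (-1:ℝ))).mul hg) hz,
    lap_const_mul hU hg hz]
  ring

end basic

/-- Second derivative test. -/
lemma second_deriv_test {g φ : ℝ → ℝ} {c : ℝ}
    (hg : ∀ᶠ t in 𝓝 (0:ℝ), HasDerivAt g (φ t) t)
    (hφ : HasDerivAt φ c 0) (hmax : IsLocalMax g 0) : c ≤ 0 := by
  by_contra hc
  push_neg at hc
  have hφ0 : φ 0 = 0 := by
    have h0 : HasDerivAt g (φ 0) 0 := hg.self_of_nhds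
    rw [← h0.deriv]
    exact hmax.deriv_eq_zero
  have hslope : Tendsto (slope φ 0) (𝓝[≠] (0:ℝ)) (𝓝 c) :=
    hasDerivAt_iff_tendsto_slope.1 hφ
  have hpos : ∀ᶠ t in 𝓝[≠] (0:ℝ), 0 < slope φ 0 t :=
    hslope.eventually (eventually_gt_nhds hc)
  have hev : ∀ᶠ t in 𝓝 (0:ℝ), HasDerivAt g (φ t) t ∧ g t ≤ g 0 := hg.and hmax
  obtain ⟨δ, hδpos, hδ⟩ := Metric.eventually_nhds_iff.1 hev
  obtain ⟨δ', hδ'pos, hδ'⟩ := Metric.eventually_nhds_iff.1 (eventually_nhdsWithin_iff.1 hpos)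
  set t1 : ℝ := min δ δ' / 2 with ht1
  have ht1pos : 0 < t1 := by positivity
  have ht1δ : t1 < δ := by
    calc t1 ≤ δ / 2 := by apply div_le_div_of_nonneg_right (min_le_left _ _) <;> norm_num
    _ < δ := by linarith
  have ht1δ' : t1 < δ' := by
    calc t1 ≤ δ' / 2 := by apply div_le_div_of_nonneg_right (min_le_right _ _) <;> norm_num
    _ < δ' := by linarith
  have hin : ∀ x ∈ Set.Icc (0:ℝ) t1, HasDerivAt g (φ x) x ∧ g x ≤ g 0 := by
    intro x hx
    apply hδ
    rw [Real.dist_eq, sub_zero, abs_of_nonneg hx.1]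
    exact lt_of_le_of_lt hx.2 ht1δ
  have hmono : StrictMonoOn g (Set.Icc 0 t1) := by
    apply strictMonoOn_of_deriv_pos (convex_Icc 0 t1)
    · exact fun x hx => ((hin x hx).1.differentiableAt.continuousAt).continuousWithinAt
    · intro x hx
      rw [interior_Icc] at hx
      have hφx : 0 < φ x := by
        have hsl : 0 < slope φ 0 x := by
          apply hδ'
          · rw [Real.dist_eq, sub_zero, abs_of_nonneg hx.1.le]
            exact lt_trans hx.2 ht1δ'
          · exact Set.mem_compl_singleton_iff.2 (ne_of_gt hx.1)
        rw [slope_def_field, hφ0, sub_zero, sub_zero] at hsl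
        have := mul_pos hsl hx.1
        rwa [div_mul_cancel₀ _ (ne_of_gt hx.1)] at this
      rw [(hin x (Set.mem_Icc.2 ⟨hx.1.le, hx.2.le⟩)).1.deriv]
      exact hφx
  have h01 : g 0 < g t1 :=
    hmono (Set.left_mem_Icc.2 ht1pos.le) (Set.right_mem_Icc.2 ht1pos.le) ht1pos
  exact absurd (hin t1 (Set.right_mem_Icc.2 ht1pos.le)).2 (not_le.2 h01)

section localmax
variable {f : ℂ → ℝ} {U : Set ℂ} {z : ℂ}

lemma hasDerivAt_comp_line (hU : IsOpen U) (hf : ContDiffOn ℝ (⊤ : ℕ∞) f U) (v : ℂ) {t : ℝ}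
    (ht : z + t • v ∈ U) :
    HasDerivAt (fun s : ℝ => f (z + s • v)) (fderiv ℝ f (z + t • v) v) t := by
  have hline : HasDerivAt (fun s : ℝ => z + s • v) v t := by
    simpa using ((hasDerivAt_id t).smul_const v).const_add z
  have hfd : HasFDerivAt f (fderiv ℝ f (z + t • v)) (z + t • v) :=
    (diffAt_of_smoothOn hU hf ht).hasFDerivAt
  exact hfd.comp_hasDerivAt t hline

lemma hasDerivAt_fderiv_line (hU : IsOpen U) (hf : ContDiffOn ℝ (⊤ : ℕ∞) f U) (hz : z ∈ U) (v : ℂ) :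
    HasDerivAt (fun t : ℝ => fderiv ℝ f (z + t • v) v)
      (fderiv ℝ (fderiv ℝ f) z v v) 0 := by
  have hline : HasDerivAt (fun s : ℝ => z + s • v) v 0 := by
    simpa using ((hasDerivAt_id (0:ℝ)).smul_const v).const_add z
  have hline0 : (fun s : ℝ => z + s • v) 0 = z := by simp
  have hfd : HasFDerivAt (fderiv ℝ f) (fderiv ℝ (fderiv ℝ f) z) z :=
    (diffAt_fderiv_of_smoothOn hU hf hz).hasFDerivAt
  have hfd' : HasFDerivAt (fderiv ℝ f) (fderiv ℝ (fderiv ℝ f) z) (z + (0:ℝ) • v) := by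
    rwa [zero_smul, add_zero]
  have h1 : HasDerivAt (fun t : ℝ => fderiv ℝ f (z + t • v))
      (fderiv ℝ (fderiv ℝ f) z v) 0 := hfd'.comp_hasDerivAt 0 hline
  have h2 := (ContinuousLinearMap.apply ℝ ℝ v).hasFDerivAt.comp_hasDerivAt 0 h1
  exact h2

lemma lap_nonpos_of_isLocalMax (hU : IsOpen U) (hf : ContDiffOn ℝ (⊤ : ℕ∞) f U) (hz : z ∈ U)
    (hmax : IsLocalMax f z) : lap f z ≤ 0 := by
  have key : ∀ v : ℂ, fderiv ℝ (fderiv ℝ f) z v v ≤ 0 := by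
    intro v
    have hcont : Continuous (fun s : ℝ => z + s • v) := by continuity
    have htend : Tendsto (fun s : ℝ => z + s • v) (𝓝 0) (𝓝 z) :=
      hcont.tendsto' 0 z (by simp)
    have hmem : ∀ᶠ t in 𝓝 (0:ℝ), z + t • v ∈ U := htend.eventually (hU.mem_nhds hz)
    have hg : ∀ᶠ t in 𝓝 (0:ℝ), HasDerivAt (fun s : ℝ => f (z + s • v))
        (fderiv ℝ f (z + t • v) v) t := by
      filter_upwards [hmem] with t ht using hasDerivAt_comp_line hU hf v ht
    have hgm : IsLocalMax (fun s : ℝ => f (z + s • v)) 0 := by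
      have := htend.eventually hmax
      simpa [IsLocalMax, IsMaxFilter] using this
    exact second_deriv_test hg (hasDerivAt_fderiv_line hU hf hz v) hgm
  rw [lap_eq]
  have := add_nonpos (key 1) (key Complex.I)
  exact this

end localmax

section logabs

noncomputable def ℓog : ℂ → ℝ := fun z => Real.log (‖z‖)

lemma ℓog_eq {w : ℂ} (hw : w ≠ 0) : ℓog w = (1/2) * Real.log (w.re^2 + w.im^2) := by
  have h1 : ‖w‖ = Real.sqrt (w.re^2 + w.im^2) := by
    rw [Complex.norm_def, Complex.normSq_apply]; ring_nf
  rw [ℓog, h1, Real.log_sqrt (by positivity)]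
  ring

lemma contDiffOn_ℓog : ContDiffOn ℝ (⊤ : ℕ∞) ℓog {(0:ℂ)}ᶜ := by
  have h : ContDiffOn ℝ (⊤ : ℕ∞) (fun w : ℂ => (1/2) * Real.log (w.re^2 + w.im^2)) {(0:ℂ)}ᶜ := by
    intro w hw
    have hne : w.re^2 + w.im^2 ≠ 0 := by
      have := Complex.normSq_pos.2 (Set.mem_compl_singleton_iff.1 hw)
      rw [Complex.normSq_apply] at this
      nlinarith
    have hsq : ContDiff ℝ (⊤ : ℕ∞) (fun w : ℂ => w.re^2 + w.im^2) :=
      (Complex.reCLM.contDiff.pow 2).add (Complex.imCLM.contDiff.pow 2)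
    have hlog : ContDiffAt ℝ (⊤ : ℕ∞) (fun w : ℂ => Real.log (w.re^2 + w.im^2)) w :=
      hsq.contDiffAt.log hne
    exact (contDiffAt_const.mul hlog).contDiffWithinAt
  exact h.congr (fun w hw => ℓog_eq (Set.mem_compl_singleton_iff.1 hw))

end logabs

section lapℓog
variable {z : ℂ}

lemma isOpen_compl_zero : IsOpen ({(0:ℂ)}ᶜ) := isOpen_compl_singleton

lemma fderiv2_ℓog (hz : z ≠ 0) (v : ℂ) :
    fderiv ℝ (fderiv ℝ ℓog) z v v =
      (v.re^2 + v.im^2) / (z.re^2 + z.im^2)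
      - 2 * (v.re * z.re + v.im * z.im)^2 / (z.re^2 + z.im^2)^2 := by
  set α := v.re
  set β := v.im
  set x := z.re
  set y := z.im
  have hr2 : 0 < x^2 + y^2 := by
    have := Complex.normSq_pos.2 hz
    rw [Complex.normSq_apply] at this
    nlinarith [sq_nonneg x, sq_nonneg y]
  set p : ℝ → ℝ := fun t => (x + t*α)^2 + (y + t*β)^2 with hp
  have hre : ∀ t : ℝ, (z + t • v).re = x + t*α := by
    intro t; simp [Complex.add_re, Complex.smul_re]; rfl
  have him : ∀ t : ℝ, (z + t • v).im = y + t*β := by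
    intro t; simp [Complex.add_im, Complex.smul_im]; rfl
  have hpz : p 0 = x^2 + y^2 := by simp [hp]
  -- p is continuous and positive at 0, hence positive near 0
  have hppos : ∀ t : ℝ, z + t • v ≠ 0 → 0 < p t := by
    intro t ht
    have hpt : p t = (z + t • v).re^2 + (z + t • v).im^2 := by rw [hre, him]
    have := Complex.normSq_pos.2 ht
    rw [Complex.normSq_apply] at this
    rw [hpt]
    nlinarith [sq_nonneg ((z + t•v).re), sq_nonneg ((z + t•v).im)]
  set S : Set ℝ := {s : ℝ | z + s • v ≠ 0} with hS
  have hSopen : IsOpen S := by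
    have : Continuous (fun s : ℝ => z + s • v) := by continuity
    exact isOpen_compl_singleton.preimage this
  have h0S : (0:ℝ) ∈ S := by simp [hS, hz]
  set φ : ℝ → ℝ := fun t => (α*(x + t*α) + β*(y + t*β)) / p t with hφ
  have hp' : ∀ t : ℝ, HasDerivAt p (2*(x + t*α)*α + 2*(y + t*β)*β) t := by
    intro t
    have h1 : HasDerivAt (fun s : ℝ => x + s*α) α t := by
      simpa using ((hasDerivAt_id t).mul_const α).const_add x
    have h2 : HasDerivAt (fun s : ℝ => y + s*β) β t := by
      simpa using ((hasDerivAt_id t).mul_const β).const_add y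
    have := (h1.fun_pow 2).fun_add (h2.fun_pow 2)
    simpa [mul_comm, mul_assoc, mul_left_comm] using this
  -- A : derivative of t ↦ ℓog (z + t•v) is φ t, on S
  have hA : ∀ t ∈ S, HasDerivAt (fun s : ℝ => ℓog (z + s • v)) (φ t) t := by
    intro t ht
    have hptpos : 0 < p t := hppos t ht
    have hlog : HasDerivAt (fun s => Real.log (p s)) ((p t)⁻¹ * (2*(x + t*α)*α + 2*(y + t*β)*β)) t :=
      (Real.hasDerivAt_log hptpos.ne').comp t (hp' t)
    have hhalf : HasDerivAt (fun s => (1/2) * Real.log (p s))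
        ((1/2) * ((p t)⁻¹ * (2*(x + t*α)*α + 2*(y + t*β)*β))) t := hlog.const_mul (1/2)
    have hval : (1/2) * ((p t)⁻¹ * (2*(x + t*α)*α + 2*(y + t*β)*β)) = φ t := by
      rw [hφ]
      field_simp
    rw [hval] at hhalf
    apply hhalf.congr_of_eventuallyEq
    filter_upwards [hSopen.mem_nhds ht] with s hs
    rw [ℓog_eq hs, hre, him]
  -- B : derivative of φ at 0
  have hB : HasDerivAt φ ((α^2 + β^2) / (x^2 + y^2)
      - 2 * (α*x + β*y)^2 / (x^2 + y^2)^2) 0 := by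
    have hnum : HasDerivAt (fun t : ℝ => α*(x + t*α) + β*(y + t*β)) (α*α + β*β) 0 := by
      have h1 : HasDerivAt (fun s : ℝ => x + s*α) α 0 := by
        simpa using ((hasDerivAt_id (0:ℝ)).mul_const α).const_add x
      have h2 : HasDerivAt (fun s : ℝ => y + s*β) β 0 := by
        simpa using ((hasDerivAt_id (0:ℝ)).mul_const β).const_add y
      exact (h1.const_mul α).add (h2.const_mul β)
    have hden := hp' 0
    have hp0ne : p 0 ≠ 0 := (hppos 0 h0S).ne'
    have := hnum.fun_div hden hp0ne
    refine this.congr_deriv ?_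
    symm
    rw [hpz] at *
    have hxy : (x:ℝ)^2 + y^2 ≠ 0 := by rw [← hpz]; exact hp0ne
    field_simp
    ring
  -- C : identify with the second fderiv
  have hψ := hasDerivAt_fderiv_line isOpen_compl_zero contDiffOn_ℓog hz v
  have heq : (fun t : ℝ => fderiv ℝ ℓog (z + t • v) v) =ᶠ[nhds 0] φ := by
    filter_upwards [hSopen.mem_nhds h0S] with t ht
    exact (hasDerivAt_comp_line isOpen_compl_zero contDiffOn_ℓog v ht).unique (hA t ht)
  have hφD : HasDerivAt φ (fderiv ℝ (fderiv ℝ ℓog) z v v) 0 :=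
    hψ.congr_of_eventuallyEq heq.symm
  exact hφD.unique hB

lemma lap_ℓog (hz : z ≠ 0) : lap ℓog z = 0 := by
  rw [lap_eq, fderiv2_ℓog hz 1, fderiv2_ℓog hz Complex.I]
  have hr2 : 0 < z.re^2 + z.im^2 := by
    have := Complex.normSq_pos.2 hz
    rw [Complex.normSq_apply] at this
    nlinarith [sq_nonneg z.re, sq_nonneg z.im]
  simp only [Complex.one_re, Complex.one_im, Complex.I_re, Complex.I_im]
  field_simp
  ring

end lapℓog

section rotation
variable {f : ℂ → ℝ} {ω z : ℂ}

set_option maxHeartbeats 1000000 in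
lemma lap_rotate (hf : ContDiffOn ℝ (⊤ : ℕ∞) f {(0:ℂ)}ᶜ) (hω : ‖ω‖ = 1) (hz : z ≠ 0) :
    lap (fun w => f (ω * w)) z = lap f (ω * z) := by
  have hω0 : ω ≠ 0 := by
    intro h; rw [h] at hω; simp at hω
  set L : ℂ →L[ℝ] ℂ := ω • ContinuousLinearMap.id ℝ ℂ with hL
  have hLapp : ∀ w : ℂ, L w = ω * w := fun w => by
    simp [hL, smul_eq_mul]
  have hLne : ∀ w : ℂ, w ≠ 0 → ω * w ≠ 0 := fun w hw => mul_ne_zero hω0 hw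
  -- first derivative of g = f ∘ L on {0}ᶜ
  have hfd : ∀ w : ℂ, w ≠ 0 → HasFDerivAt (fun x => f (ω * x))
      ((fderiv ℝ f (ω * w)).comp L) w := by
    intro w hw
    have h1 : HasFDerivAt f (fderiv ℝ f (ω * w)) (L w) := by
      rw [hLapp]
      exact (diffAt_of_smoothOn isOpen_compl_zero hf (hLne w hw)).hasFDerivAt
    have h2 := h1.comp w L.hasFDerivAt
    apply h2.congr_of_eventuallyEq
    filter_upwards with x
    simp [Function.comp, hLapp]
  have hev : (fun w => fderiv ℝ (fun x => f (ω * x)) w) =ᶠ[nhds z]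
      (fun w => (fderiv ℝ f (ω * w)).comp L) := by
    filter_upwards [isOpen_compl_zero.mem_nhds hz] with w hw
    exact (hfd w hw).fderiv
  -- second derivative
  set precomp : (ℂ →L[ℝ] ℝ) →L[ℝ] (ℂ →L[ℝ] ℝ) :=
    (ContinuousLinearMap.compL ℝ ℂ ℂ ℝ).flip L with hpre
  have hpreapp : ∀ A : ℂ →L[ℝ] ℝ, precomp A = A.comp L := fun A => rfl
  have hB : HasFDerivAt (fderiv ℝ f) (fderiv ℝ (fderiv ℝ f) (ω * z)) (L z) := by
    rw [hLapp]
    exact (diffAt_fderiv_of_smoothOn isOpen_compl_zero hf (hLne z hz)).hasFDerivAt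
  have h3 : HasFDerivAt (fun w => (fderiv ℝ f (ω * w)).comp L)
      (precomp.comp ((fderiv ℝ (fderiv ℝ f) (ω * z)).comp L)) z := by
    have h4 := (precomp.hasFDerivAt.comp (L z) hB).comp z L.hasFDerivAt
    apply h4.congr_of_eventuallyEq
    filter_upwards with x
    simp [Function.comp, hLapp, hpreapp]
  have h5 : fderiv ℝ (fderiv ℝ (fun x => f (ω * x))) z
      = precomp.comp ((fderiv ℝ (fderiv ℝ f) (ω * z)).comp L) := by
    rw [hev.fderiv_eq]
    exact h3.fderiv
  -- evaluate
  have happ : ∀ v w : ℂ, fderiv ℝ (fderiv ℝ (fun x => f (ω * x))) z v w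
      = fderiv ℝ (fderiv ℝ f) (ω * z) (ω * v) (ω * w) := by
    intro v w
    rw [h5]
    simp [hpreapp, hLapp]
  -- symmetry of the second derivative of f at ω z
  set B := fderiv ℝ (fderiv ℝ f) (ω * z) with hBdef
  have hsym : ∀ v w : ℂ, B v w = B w v := by
    intro v w
    apply second_derivative_symmetric_of_eventually (f := f) (x := ω * z)
    · filter_upwards [isOpen_compl_zero.mem_nhds (hLne z hz)] with y hy
      exact (diffAt_of_smoothOn isOpen_compl_zero hf hy).hasFDerivAt
    · exact (diffAt_fderiv_of_smoothOn isOpen_compl_zero hf (hLne z hz)).hasFDerivAt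
  -- bilinear expansion
  set c := ω.re
  set s := ω.im
  have hcs : c^2 + s^2 = 1 := by
    have := Complex.sq_norm ω
    rw [hω] at this
    rw [Complex.normSq_apply] at this
    nlinarith
  have hω1 : ω * 1 = c • (1:ℂ) + s • Complex.I := by
    simp only [Complex.real_smul, mul_one]
    exact (Complex.re_add_im ω).symm
  have hωI : ω * Complex.I = (-s) • (1:ℂ) + c • Complex.I := by
    simp only [Complex.real_smul, mul_one]
    nth_rewrite 1 [← Complex.re_add_im ω]
    have hI2 : Complex.I * Complex.I = -1 := Complex.I_mul_I
    push_cast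
    linear_combination (ω.im : ℂ) * hI2
  rw [lap_eq, lap_eq, happ, happ, hω1, hωI]
  simp only [map_add, map_smul, ContinuousLinearMap.add_apply, ContinuousLinearMap.smul_apply,
    smul_eq_mul]
  rw [hsym Complex.I 1]
  linear_combination (B 1 1 + B Complex.I Complex.I) * hcs

end rotation

lemma eventually_comap_abs {p : ℂ → Prop}
    (h : ∀ᶠ z in comap (fun z : ℂ => ‖z‖) atTop, p z) :
    ∃ R : ℝ, ∀ z : ℂ, R ≤ ‖z‖ → p z := by
  rw [eventually_comap] at h
  obtain ⟨R, hR⟩ := eventually_atTop.1 h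
  exact ⟨R, fun z hz => hR (‖z‖) hz z rfl⟩

lemma tendsto_log_abs_atBot :
    Tendsto (fun z : ℂ => Real.log (‖z‖)) (𝓝[≠] (0:ℂ)) atBot := by
  apply Real.tendsto_log_nhdsNE_zero.comp
  have h1 : ContinuousWithinAt (fun z : ℂ => ‖z‖) {(0:ℂ)}ᶜ 0 :=
    continuous_norm.continuousWithinAt
  have h2 : Set.MapsTo (fun z : ℂ => ‖z‖) {(0:ℂ)}ᶜ {(0:ℝ)}ᶜ := by
    intro z hz
    simp only [Set.mem_compl_iff, Set.mem_singleton_iff] at *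
    exact norm_ne_zero_iff.mpr hz
  have := h1.tendsto_nhdsWithin h2
  simpa using this

set_option maxHeartbeats 2000000 in
lemma comparison {a b : ℝ} (ha : 0 < a) (hb : 0 < b) {u1 v1 u2 v2 : ℂ → ℝ}
    (s1 : IsTodaSol a b u1 v1) (s2 : IsTodaSol a b u2 v2)
    (hw1i : Tendsto (fun z => u1 z - u2 z) (comap (fun z : ℂ => ‖z‖) atTop) (nhds 0))
    (hw2i : Tendsto (fun z => v1 z - v2 z) (comap (fun z : ℂ => ‖z‖) atTop) (nhds 0))
    (hw10 : Tendsto (fun z : ℂ => (u1 z - u2 z) / Real.log (‖z‖))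
      (𝓝[≠] (0:ℂ)) (nhds 0))
    (hw20 : Tendsto (fun z : ℂ => (v1 z - v2 z) / Real.log (‖z‖))
      (𝓝[≠] (0:ℂ)) (nhds 0)) :
    ∀ z : ℂ, z ≠ 0 → u1 z ≤ u2 z ∧ v1 z ≤ v2 z := by
  obtain ⟨hsu1, hsv1, heq1⟩ := s1
  obtain ⟨hsu2, hsv2, heq2⟩ := s2
  have hsu1' : ContDiffOn ℝ (⊤ : ℕ∞) u1 {(0:ℂ)}ᶜ := by exact hsu1
  have hsv1' : ContDiffOn ℝ (⊤ : ℕ∞) v1 {(0:ℂ)}ᶜ := by exact hsv1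
  have hsu2' : ContDiffOn ℝ (⊤ : ℕ∞) u2 {(0:ℂ)}ᶜ := by exact hsu2
  have hsv2' : ContDiffOn ℝ (⊤ : ℕ∞) v2 {(0:ℂ)}ᶜ := by exact hsv2
  set w1 : ℂ → ℝ := fun z => u1 z - u2 z with hw1def
  set w2 : ℂ → ℝ := fun z => v1 z - v2 z with hw2def
  have hsw1 : ContDiffOn ℝ (⊤ : ℕ∞) w1 {(0:ℂ)}ᶜ := hsu1'.sub hsu2'
  have hsw2 : ContDiffOn ℝ (⊤ : ℕ∞) w2 {(0:ℂ)}ᶜ := hsv1'.sub hsv2'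
  have hlapw1 : ∀ z : ℂ, z ≠ 0 → lap w1 z =
      4 * (Real.exp (a * u1 z) - Real.exp (a * u2 z))
      - 4 * (Real.exp (v1 z - u1 z) - Real.exp (v2 z - u2 z)) := by
    intro z hz
    have h := lap_sub isOpen_compl_zero hsu1' hsu2' (Set.mem_compl_singleton_iff.2 hz)
    rw [← hw1def] at h
    rw [h, (heq1 z hz).1, (heq2 z hz).1]
    ring
  have hlapw2 : ∀ z : ℂ, z ≠ 0 → lap w2 z =
      4 * (Real.exp (v1 z - u1 z) - Real.exp (v2 z - u2 z))
      - 4 * (Real.exp (-(b * v1 z)) - Real.exp (-(b * v2 z))) := by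
    intro z hz
    have h := lap_sub isOpen_compl_zero hsv1' hsv2' (Set.mem_compl_singleton_iff.2 hz)
    rw [← hw2def] at h
    rw [h, (heq1 z hz).2, (heq2 z hz).2]
    ring
  intro zs hzs
  have habszs : 0 < ‖zs‖ := norm_pos_iff.mpr hzs
  have main : ∀ η : ℝ, 0 < η → w1 zs ≤ 3*η ∧ w2 zs ≤ 3*η := by
    intro η hη
    -- outer radius
    obtain ⟨R0, hR0⟩ := eventually_comap_abs
      ((hw1i.eventually_lt_const hη).and (hw2i.eventually_lt_const hη))
    set R : ℝ := max R0 (max (‖zs‖ + 1) 2) with hRdef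
    have hR2 : (2:ℝ) ≤ R := le_max_of_le_right (le_max_right _ _)
    have hRzs : ‖zs‖ < R :=
      lt_of_lt_of_le (by linarith) (le_max_of_le_right (le_max_left _ _))
    have hR0R : R0 ≤ R := le_max_left _ _
    have hlogR : 0 < Real.log R := Real.log_pos (by linarith)
    -- epsilon
    set C : ℝ := max (Real.log R) (1 + |Real.log (‖zs‖)|) with hCdef
    have hC : 0 < C := lt_of_lt_of_le hlogR (le_max_left _ _)
    set ε : ℝ := η / C with hεdef
    have hε : 0 < ε := div_pos hη hC
    have hεC : ε * C = η := div_mul_cancel₀ η (ne_of_gt hC)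
    have hεlogR : ε * Real.log R ≤ η := by
      calc ε * Real.log R ≤ ε * C := by
            apply mul_le_mul_of_nonneg_left (le_max_left _ _) hε.le
        _ = η := hεC
    have hεlogzs : ε * |Real.log (‖zs‖)| ≤ η := by
      calc ε * |Real.log (‖zs‖)| ≤ ε * C := by
            apply mul_le_mul_of_nonneg_left _ hε.le
            calc |Real.log (‖zs‖)| ≤ 1 + |Real.log (‖zs‖)| := by linarith
              _ ≤ C := le_max_right _ _
        _ = η := hεC
    -- the perturbed functions
    set F1 : ℂ → ℝ := fun z => w1 z + ε * ℓog z with hF1def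
    set F2 : ℂ → ℝ := fun z => w2 z + ε * ℓog z with hF2def
    have hsF1 : ContDiffOn ℝ (⊤ : ℕ∞) F1 {(0:ℂ)}ᶜ := hsw1.add (contDiffOn_const.mul contDiffOn_ℓog)
    have hsF2 : ContDiffOn ℝ (⊤ : ℕ∞) F2 {(0:ℂ)}ᶜ := hsw2.add (contDiffOn_const.mul contDiffOn_ℓog)
    set m : ℝ := max (F1 zs) (F2 zs) with hmdef
    -- F1, F2 tend to -infinity at 0
    have hbot : ∀ (w : ℂ → ℝ), (Tendsto (fun z : ℂ => w z / Real.log (‖z‖))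
        (𝓝[≠] (0:ℂ)) (nhds 0)) →
        Tendsto (fun z => w z + ε * ℓog z) (𝓝[≠] (0:ℂ)) atBot := by
      intro w hw
      have h2 : Tendsto (fun z : ℂ => w z / Real.log (‖z‖) + ε)
          (𝓝[≠] (0:ℂ)) (nhds (0 + ε)) := hw.add tendsto_const_nhds
      have h3 := tendsto_log_abs_atBot.atBot_mul_pos (by linarith : (0:ℝ) < 0 + ε) h2
      apply h3.congr'
      filter_upwards [tendsto_log_abs_atBot.eventually (eventually_lt_atBot 0)] with z hz
      have hne : Real.log (‖z‖) ≠ 0 := ne_of_lt hz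
      show Real.log (‖z‖) * (w z / Real.log (‖z‖) + ε) = w z + ε * ℓog z
      rw [mul_add, mul_div_cancel₀ _ hne, ℓog]
      ring
    have hF1bot : Tendsto F1 (𝓝[≠] (0:ℂ)) atBot := hbot w1 hw10
    have hF2bot : Tendsto F2 (𝓝[≠] (0:ℂ)) atBot := hbot w2 hw20
    have hsm : ∀ᶠ z in 𝓝[≠] (0:ℂ), F1 z < m ∧ F2 z < m :=
      (hF1bot.eventually (eventually_lt_atBot m)).and (hF2bot.eventually (eventually_lt_atBot m))
    rw [eventually_nhdsWithin_iff] at hsm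
    obtain ⟨r, hrpos, hball⟩ := Metric.eventually_nhds_iff.1 hsm
    set r0 : ℝ := min r (‖zs‖) / 2 with hr0def
    have hr0pos : 0 < r0 := by
      apply div_pos _ (by norm_num)
      exact lt_min hrpos habszs
    have hr0r : r0 < r := by
      calc r0 ≤ r / 2 := by
            apply div_le_div_of_nonneg_right (min_le_left _ _)
            norm_num
        _ < r := by linarith
    have hr0zs : r0 ≤ ‖zs‖ := by
      calc r0 ≤ ‖zs‖ / 2 := by
            apply div_le_div_of_nonneg_right (min_le_right _ _)
            norm_num
        _ ≤ ‖zs‖ := by linarith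
    -- the annulus
    set A : Set ℂ := {z | r0 ≤ ‖z‖ ∧ ‖z‖ ≤ R} with hAdef
    have hzsA : zs ∈ A := ⟨hr0zs, hRzs.le⟩
    have hA0 : ∀ z ∈ A, z ≠ 0 := by
      intro z hz h0
      rw [h0] at hz
      simp only [hAdef, Set.mem_setOf_eq, map_zero, norm_zero] at hz
      linarith [hz.1]
    have hAsub : A ⊆ {(0:ℂ)}ᶜ := fun z hz => Set.mem_compl_singleton_iff.2 (hA0 z hz)
    have hAcomp : IsCompact A := by
      have hclosed : IsClosed A := by
        have : A = (fun z : ℂ => ‖z‖) ⁻¹' (Set.Icc r0 R) := by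
          ext z; simp [hAdef, Set.mem_Icc]
        rw [this]
        exact isClosed_Icc.preimage continuous_norm
      apply (isCompact_closedBall (0:ℂ) R).of_isClosed_subset hclosed
      intro z hz
      rw [Metric.mem_closedBall, Complex.dist_eq, sub_zero]
      exact hz.2
    have hFcont : ContinuousOn (fun z => max (F1 z) (F2 z)) A :=
      ContinuousOn.sup (hsF1.continuousOn.mono hAsub) (hsF2.continuousOn.mono hAsub)
    obtain ⟨z0, hz0A, hz0max⟩ := hAcomp.exists_isMaxOn ⟨zs, hzsA⟩ hFcont
    have hz0ne : z0 ≠ 0 := hA0 z0 hz0A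
    have hz0mem : z0 ∈ ({(0:ℂ)}ᶜ) := Set.mem_compl_singleton_iff.2 hz0ne
    have hmax' : ∀ z ∈ A, max (F1 z) (F2 z) ≤ max (F1 z0) (F2 z0) := fun z hz => hz0max hz
    set M : ℝ := max (F1 z0) (F2 z0) with hMdef
    have hmM : m ≤ M := hmax' zs hzsA
    by_cases hM : M ≤ 2*η
    · -- done : w_i zs ≤ 3η
      have hF1zs : F1 zs ≤ 2*η := le_trans (le_trans (le_max_left _ _) hmM) hM
      have hF2zs : F2 zs ≤ 2*η := le_trans (le_trans (le_max_right _ _) hmM) hM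
      have hlogbound : -(ε * ℓog zs) ≤ η := by
        have : |ε * ℓog zs| ≤ η := by
          rw [abs_mul, abs_of_pos hε]
          exact hεlogzs
        have := neg_le_of_abs_le this
        linarith
      constructor
      · have : w1 zs + ε * ℓog zs ≤ 2*η := hF1zs
        linarith
      · have : w2 zs + ε * ℓog zs ≤ 2*η := hF2zs
        linarith
    · push_neg at hM
      exfalso
      -- z0 is in the open annulus
      have houter : ‖z0‖ < R := by
        rcases lt_or_eq_of_le hz0A.2 with h | h
        · exact h
        · exfalso
          have hz0R : R0 ≤ ‖z0‖ := by rw [h]; exact hR0R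
          obtain ⟨h1, h2⟩ := hR0 z0 hz0R
          have hlog0 : ℓog z0 = Real.log R := by rw [ℓog, h]
          have hb1 : F1 z0 < 2*η := by
            have : F1 z0 = w1 z0 + ε * Real.log R := by rw [hF1def]; simp [hlog0]
            rw [this]; linarith
          have hb2 : F2 z0 < 2*η := by
            have : F2 z0 = w2 z0 + ε * Real.log R := by rw [hF2def]; simp [hlog0]
            rw [this]; linarith
          have : M < 2*η := max_lt hb1 hb2
          linarith
      have hinner : r0 < ‖z0‖ := by
        rcases lt_or_eq_of_le hz0A.1 with h | h
        · exact h
        · exfalso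
          have hdist : dist z0 0 < r := by
            rw [Complex.dist_eq, sub_zero, ← h]
            exact hr0r
          obtain ⟨h1, h2⟩ := hball hdist hz0mem
          have : M < m := max_lt h1 h2
          linarith
      set U0 : Set ℂ := {z | r0 < ‖z‖ ∧ ‖z‖ < R} with hU0def
      have hU0open : IsOpen U0 := by
        have : U0 = (fun z : ℂ => ‖z‖) ⁻¹' (Set.Ioo r0 R) := by
          ext z; simp [hU0def, Set.mem_Ioo]
        rw [this]
        exact isOpen_Ioo.preimage continuous_norm
      have hz0U0 : z0 ∈ U0 := ⟨hinner, houter⟩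
      have hU0A : U0 ⊆ A := fun z hz => ⟨hz.1.le, hz.2.le⟩
      -- bound on the barrier at z0
      have hεlogz0 : ε * ℓog z0 ≤ η := by
        have h1 : ℓog z0 ≤ Real.log R := by
          rw [ℓog]
          exact Real.log_le_log (norm_pos_iff.mpr hz0ne) hz0A.2
        calc ε * ℓog z0 ≤ ε * Real.log R := mul_le_mul_of_nonneg_left h1 hε.le
          _ ≤ η := hεlogR
      -- case on which function attains the max
      rcases le_total (F2 z0) (F1 z0) with hcase | hcase
      · -- F1 attains the max
        have hF1M : F1 z0 = M := (max_eq_left hcase).symm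
        have hlocmax : IsLocalMax F1 z0 := by
          filter_upwards [hU0open.mem_nhds hz0U0] with z hz
          calc F1 z ≤ max (F1 z) (F2 z) := le_max_left _ _
            _ ≤ M := hmax' z (hU0A hz)
            _ = F1 z0 := hF1M.symm
        have hnonpos : lap F1 z0 ≤ 0 :=
          lap_nonpos_of_isLocalMax isOpen_compl_zero hsF1 hz0mem hlocmax
        have hlapF1 : lap F1 z0 = lap w1 z0 := by
          have h1 := lap_add isOpen_compl_zero hsw1
            (contDiffOn_const.mul contDiffOn_ℓog) hz0mem (f := w1) (g := fun z => ε * ℓog z)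
          rw [← hF1def] at h1
          rw [h1, lap_const_mul isOpen_compl_zero contDiffOn_ℓog hz0mem ε, lap_ℓog hz0ne]
          ring
        -- positivity
        have hw1pos : η < w1 z0 := by
          have : w1 z0 = F1 z0 - ε * ℓog z0 := by rw [hF1def]; ring
          rw [this, hF1M]
          linarith
        have hw21 : w2 z0 ≤ w1 z0 := by
          have : w2 z0 + ε * ℓog z0 ≤ w1 z0 + ε * ℓog z0 := hcase
          linarith
        have he1 : Real.exp (a * u2 z0) < Real.exp (a * u1 z0) := by
          apply Real.exp_lt_exp.2
          have : 0 < a * w1 z0 := mul_pos ha (by linarith)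
          rw [hw1def] at this
          simp only at this
          nlinarith
        have he2 : Real.exp (v1 z0 - u1 z0) ≤ Real.exp (v2 z0 - u2 z0) := by
          apply Real.exp_le_exp.2
          have h := hw21
          rw [hw1def, hw2def] at h
          simp only at h
          linarith
        have : 0 < lap w1 z0 := by
          rw [hlapw1 z0 hz0ne]
          nlinarith
        rw [hlapF1] at hnonpos
        linarith
      · -- F2 attains the max
        have hF2M : F2 z0 = M := (max_eq_right hcase).symm
        have hlocmax : IsLocalMax F2 z0 := by
          filter_upwards [hU0open.mem_nhds hz0U0] with z hz
          calc F2 z ≤ max (F1 z) (F2 z) := le_max_right _ _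
            _ ≤ M := hmax' z (hU0A hz)
            _ = F2 z0 := hF2M.symm
        have hnonpos : lap F2 z0 ≤ 0 :=
          lap_nonpos_of_isLocalMax isOpen_compl_zero hsF2 hz0mem hlocmax
        have hlapF2 : lap F2 z0 = lap w2 z0 := by
          have h1 := lap_add isOpen_compl_zero hsw2
            (contDiffOn_const.mul contDiffOn_ℓog) hz0mem (f := w2) (g := fun z => ε * ℓog z)
          rw [← hF2def] at h1
          rw [h1, lap_const_mul isOpen_compl_zero contDiffOn_ℓog hz0mem ε, lap_ℓog hz0ne]
          ring
        have hw2pos : η < w2 z0 := by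
          have : w2 z0 = F2 z0 - ε * ℓog z0 := by rw [hF2def]; ring
          rw [this, hF2M]
          linarith
        have hw12 : w1 z0 ≤ w2 z0 := by
          have : w1 z0 + ε * ℓog z0 ≤ w2 z0 + ε * ℓog z0 := hcase
          linarith
        have he1 : Real.exp (v2 z0 - u2 z0) ≤ Real.exp (v1 z0 - u1 z0) := by
          apply Real.exp_le_exp.2
          have h := hw12
          rw [hw1def, hw2def] at h
          simp only at h
          linarith
        have he2 : Real.exp (-(b * v1 z0)) < Real.exp (-(b * v2 z0)) := by
          apply Real.exp_lt_exp.2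
          have : 0 < b * w2 z0 := mul_pos hb (by linarith)
          rw [hw2def] at this
          simp only at this
          nlinarith
        have : 0 < lap w2 z0 := by
          rw [hlapw2 z0 hz0ne]
          nlinarith
        rw [hlapF2] at hnonpos
        linarith
  constructor
  · by_contra h
    push_neg at h
    have h6 : 0 < (u1 zs - u2 zs) / 6 := by linarith
    have := (main _ h6).1
    rw [hw1def] at this
    simp only at this
    linarith
  · by_contra h
    push_neg at h
    have h6 : 0 < (v1 zs - v2 zs) / 6 := by linarith
    have := (main _ h6).2
    rw [hw2def] at this
    simp only at this
    linarith

lemma rotate_sol {a b : ℝ} {u v : ℂ → ℝ} (hsol : IsTodaSol a b u v) {ω : ℂ}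
    (hω : ‖ω‖ = 1) :
    IsTodaSol a b (fun w => u (ω * w)) (fun w => v (ω * w)) := by
  obtain ⟨hsu, hsv, heq⟩ := hsol
  have hω0 : ω ≠ 0 := by intro h; rw [h] at hω; simp at hω
  have hsu' : ContDiffOn ℝ (⊤ : ℕ∞) u {(0:ℂ)}ᶜ := hsu
  have hsv' : ContDiffOn ℝ (⊤ : ℕ∞) v {(0:ℂ)}ᶜ := hsv
  have hmul : ContDiff ℝ (⊤ : ℕ∞) (fun w : ℂ => ω * w) := contDiff_const.mul contDiff_id
  have hmaps : Set.MapsTo (fun w : ℂ => ω * w) {(0:ℂ)}ᶜ {(0:ℂ)}ᶜ := by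
    intro w hw
    simp only [Set.mem_compl_iff, Set.mem_singleton_iff] at *
    exact mul_ne_zero hω0 hw
  refine ⟨hsu'.comp hmul.contDiffOn hmaps, hsv'.comp hmul.contDiffOn hmaps, ?_⟩
  intro z hz
  constructor
  · rw [lap_rotate hsu' hω hz]
    exact (heq (ω * z) (mul_ne_zero hω0 hz)).1
  · rw [lap_rotate hsv' hω hz]
    exact (heq (ω * z) (mul_ne_zero hω0 hz)).2

lemma tendsto_rotate_infty {ω : ℂ} (hω : ‖ω‖ = 1) :
    Tendsto (fun w : ℂ => ω * w) (comap (fun z : ℂ => ‖z‖) atTop)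
      (comap (fun z : ℂ => ‖z‖) atTop) := by
  rw [tendsto_comap_iff]
  have : ((fun z : ℂ => ‖z‖) ∘ fun w : ℂ => ω * w) = fun z : ℂ => ‖z‖ := by
    funext w
    simp [Function.comp, map_mul, norm_mul, hω]
  rw [this]
  exact tendsto_comap

open Topology in
lemma tendsto_rotate_zero {ω : ℂ} (hω : ‖ω‖ = 1) :
    Tendsto (fun w : ℂ => ω * w) (𝓝[≠] (0:ℂ)) (𝓝[≠] (0:ℂ)) := by
  have hω0 : ω ≠ 0 := by intro h; rw [h] at hω; simp at hω
  have h1 : ContinuousWithinAt (fun w : ℂ => ω * w) {(0:ℂ)}ᶜ 0 :=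
    (continuous_const.mul continuous_id).continuousWithinAt
  have h2 : Set.MapsTo (fun w : ℂ => ω * w) {(0:ℂ)}ᶜ {(0:ℂ)}ᶜ := by
    intro w hw
    simp only [Set.mem_compl_iff, Set.mem_singleton_iff] at *
    exact mul_ne_zero hω0 hw
  have := h1.tendsto_nhdsWithin h2
  simpa using this

/-- The unique global solution with asymptotic data `(γ, δ)` is radial:
`u` and `v` depend only on `|z|`. -/
theorem toda_solution_radial (a b γ δ : ℝ) (ha : 0 < a) (hb : 0 < b)
    (h1 : -2 / a ≤ γ) (h2 : δ ≤ 2 / b) (h3 : γ - δ ≤ 2)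
    (u v : ℂ → ℝ) (hsol : IsTodaSol a b u v) (hasym : HasAsymData γ δ u v) :
    ∀ z z' : ℂ, z ≠ 0 → ‖z‖ = ‖z'‖ →
      u z = u z' ∧ v z = v z' := by
  intro z z' hz habs
  have hz' : z' ≠ 0 := by
    intro h
    rw [h, norm_zero] at habs
    exact hz (norm_eq_zero.1 habs)
  set ω : ℂ := z' / z with hωdef
  have hω : ‖ω‖ = 1 := by
    rw [hωdef, norm_div, ← habs, div_self (norm_ne_zero_iff.mpr hz)]
  have hωz : ω * z = z' := div_mul_cancel₀ z' hz
  obtain ⟨huI, hvI, hu0, hv0⟩ := hasym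
  -- rotated solution
  set u2 : ℂ → ℝ := fun w => u (ω * w) with hu2def
  set v2 : ℂ → ℝ := fun w => v (ω * w) with hv2def
  have hsol2 : IsTodaSol a b u2 v2 := rotate_sol hsol hω
  -- asymptotics of the rotated solution
  have hu2I : TendstoZeroAtInfty u2 := huI.comp (tendsto_rotate_infty hω)
  have hv2I : TendstoZeroAtInfty v2 := hvI.comp (tendsto_rotate_infty hω)
  have habsrot : ∀ w : ℂ, ‖ω * w‖ = ‖w‖ := by
    intro w; rw [norm_mul, hω, one_mul]
  have hu20 : LogAsymAtZero γ u2 := by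
    have := hu0.comp (tendsto_rotate_zero hω)
    apply this.congr
    intro w
    simp only [Function.comp, hu2def, habsrot]
  have hv20 : LogAsymAtZero δ v2 := by
    have := hv0.comp (tendsto_rotate_zero hω)
    apply this.congr
    intro w
    simp only [Function.comp, hv2def, habsrot]
  -- differences tend to zero
  have hdiff : ∀ (f g : ℂ → ℝ), TendstoZeroAtInfty f → TendstoZeroAtInfty g →
      Tendsto (fun z => f z - g z) (comap (fun z : ℂ => ‖z‖) atTop) (nhds 0) := by
    intro f g hf hg
    have := hf.sub hg
    simpa using this
  have hdiff0 : ∀ (c : ℝ) (f g : ℂ → ℝ), LogAsymAtZero c f → LogAsymAtZero c g →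
      Tendsto (fun z : ℂ => (f z - g z) / Real.log (‖z‖))
        (nhdsWithin 0 {(0:ℂ)}ᶜ) (nhds 0) := by
    intro c f g hf hg
    have := hf.sub hg
    simp only [sub_self] at this
    apply this.congr
    intro w
    ring
  have hle12 := comparison ha hb hsol hsol2 (hdiff u u2 huI hu2I) (hdiff v v2 hvI hv2I)
    (hdiff0 γ u u2 hu0 hu20) (hdiff0 δ v v2 hv0 hv20)
  have hle21 := comparison ha hb hsol2 hsol (hdiff u2 u hu2I huI) (hdiff v2 v hv2I hvI)
    (hdiff0 γ u2 u hu20 hu0) (hdiff0 δ v2 v hv20 hv0)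
  obtain ⟨hu12, hv12⟩ := hle12 z hz
  obtain ⟨hu21, hv21⟩ := hle21 z hz
  have hu2z : u2 z = u z' := by rw [hu2def]; simp only; rw [hωz]
  have hv2z : v2 z = v z' := by rw [hv2def]; simp only; rw [hωz]
  rw [hu2z] at hu12 hu21
  rw [hv2z] at hv12 hv21
  exact ⟨le_antisymm hu12 hu21, le_antisymm hv12 hv21⟩
end

section
/- Let a>0 and let γ₀,γ₁ ≥ 0 with γ₁ ≤ 2/a and γ₀ − γ₁ ≤ 2. Then any smooth solution (u,v) on ℂ∖{0} of the system Δu = 4(e^{au} − e^{v−u}), Δv = 4(e^{v−u} − e^{−av}) with asymptotic data (γ₀,γ₁) satisfies u(z) ≤ 0 and v(z) ≤ 0 for all z ∈ ℂ∖{0}. -/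
open Filter
open Topology Set

noncomputable def cdd (g : ℂ → ℝ) (z w : ℂ) : ℝ := fderiv ℝ (fderiv ℝ g) z w w


lemma lap_eq_cdd (g : ℂ → ℝ) (z : ℂ) : lap g z = cdd g z 1 + cdd g z Complex.I := by
  unfold lap cdd
  rw [iteratedFDeriv_two_apply, iteratedFDeriv_two_apply]
  simp

/-- chain rule package -/
lemma kl {U : Set ℂ} (hU : IsOpen U) {g : ℂ → ℝ} (hg : ContDiffOn ℝ (⊤ : ℕ∞) g U)
    {z : ℂ} (hz : z ∈ U) (w : ℂ) :
    HasDerivAt (fun t : ℝ => fderiv ℝ g (z + t • w) w) (cdd g z w) 0 ∧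
    ∀ᶠ t : ℝ in 𝓝 0, HasDerivAt (fun s : ℝ => g (z + s • w)) (fderiv ℝ g (z + t • w) w) t := by
  have hline : ∀ t : ℝ, HasDerivAt (fun s : ℝ => z + s • w) w t := by
    intro t
    simpa using ((hasDerivAt_id t).smul_const w).const_add z
  have hlineC : Continuous (fun s : ℝ => z + s • w) := by continuity
  have hmem : ∀ᶠ t : ℝ in 𝓝 0, z + t • w ∈ U := by
    have h := hlineC.continuousAt (x := (0:ℝ))
    exact h.eventually_mem (by simpa using hU.mem_nhds hz)
  constructor
  · have hgz : ContDiffAt ℝ (⊤ : ℕ∞) g z := hg.contDiffAt (hU.mem_nhds hz)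
    have hfd : ContDiffAt ℝ 1 (fderiv ℝ g) z := hgz.fderiv_right (by norm_cast)
    have hdf : HasFDerivAt (fderiv ℝ g) (fderiv ℝ (fderiv ℝ g) z) z :=
      (hfd.differentiableAt (by norm_num)).hasFDerivAt
    have hdf0 : HasFDerivAt (fderiv ℝ g) (fderiv ℝ (fderiv ℝ g) z) ((fun s : ℝ => z + s • w) 0) := by
      simpa using hdf
    have h1 : HasDerivAt (fun t : ℝ => fderiv ℝ g (z + t • w)) (fderiv ℝ (fderiv ℝ g) z w) 0 :=
      hdf0.comp_hasDerivAt 0 (hline 0)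
    have := ((ContinuousLinearMap.apply ℝ ℝ w).hasFDerivAt).comp_hasDerivAt (x := (0:ℝ)) h1
    exact this
  · filter_upwards [hmem] with t ht
    have hdiff : DifferentiableAt ℝ g (z + t • w) :=
      (hg.contDiffAt (hU.mem_nhds ht)).differentiableAt (by norm_cast)
    exact hdiff.hasFDerivAt.comp_hasDerivAt t (hline t)

noncomputable def logabs (z : ℂ) : ℝ := Real.log ‖z‖

lemma logabs_eq : logabs = fun z => Real.log (Complex.normSq z) / 2 := by
  funext z
  rw [logabs, Complex.norm_def, Real.log_sqrt (Complex.normSq_nonneg z)]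

lemma contDiff_normSq : ContDiff ℝ (⊤ : ℕ∞) (fun z : ℂ => Complex.normSq z) := by
  have : (fun z : ℂ => Complex.normSq z) = fun z : ℂ => z.re * z.re + z.im * z.im := by
    funext z; rw [Complex.normSq_apply]
  rw [this]
  exact (Complex.reCLM.contDiff.mul Complex.reCLM.contDiff).add
    (Complex.imCLM.contDiff.mul Complex.imCLM.contDiff)

lemma contDiffOn_logabs : ContDiffOn ℝ (⊤ : ℕ∞) logabs {(0:ℂ)}ᶜ := by
  rw [logabs_eq]
  intro z hz
  have hns : Complex.normSq z ≠ 0 := by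
    simpa [Complex.normSq_eq_zero] using hz
  exact (((Real.contDiffAt_log.2 hns).comp z contDiff_normSq.contDiffAt).div_const 2).contDiffWithinAt

lemma deriv2_nonpos {φ φ' : ℝ → ℝ} {c : ℝ}
    (h1 : ∀ᶠ t in 𝓝 (0:ℝ), HasDerivAt φ (φ' t) t)
    (h2 : HasDerivAt φ' c 0)
    (hmax : ∀ᶠ t in 𝓝 (0:ℝ), φ t ≤ φ 0) : c ≤ 0 := by
  by_contra hc
  push_neg at hc
  have h0 : φ' 0 = 0 :=
    IsLocalMax.hasDerivAt_eq_zero (f := φ) (f' := φ' 0) hmax h1.self_of_nhds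
  -- slope of φ' tends to c > 0
  have hslope : Tendsto (slope φ' 0) (𝓝[≠] (0:ℝ)) (𝓝 c) :=
    hasDerivAt_iff_tendsto_slope.1 h2
  have hev : ∀ᶠ t in 𝓝[≠] (0:ℝ), 0 < slope φ' 0 t :=
    hslope.eventually (eventually_gt_nhds hc)
  have hevPos : ∀ᶠ t in 𝓝[>] (0:ℝ), 0 < φ' t := by
    have := hev.filter_mono (nhdsWithin_mono 0 (fun x hx => ne_of_gt hx))
    filter_upwards [this, self_mem_nhdsWithin] with t ht ht0
    have : slope φ' 0 t = φ' t / t := by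
      simp [slope_def_field, h0]
    rw [this] at ht
    have := mul_pos ht ht0
    rwa [div_mul_cancel₀] at this
    exact ne_of_gt ht0
  obtain ⟨u, hu, hIoo⟩ := (mem_nhdsGT_iff_exists_Ioo_subset).1 hevPos
  obtain ⟨δ, hδ, hball⟩ := Metric.eventually_nhds_iff.1 (h1.and hmax)
  set t₀ : ℝ := min (δ/2) (u/2) with ht₀def
  have ht₀pos : 0 < t₀ := lt_min (by linarith) (by
    have : (0:ℝ) < u := hu
    linarith)
  have ht₀δ : t₀ < δ := lt_of_le_of_lt (min_le_left _ _) (by linarith)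
  have ht₀u : t₀ < u := lt_of_le_of_lt (min_le_right _ _) (by
    have : (0:ℝ) < u := hu
    linarith)
  have hsub : Icc (0:ℝ) t₀ ⊆ Metric.ball (0:ℝ) δ := by
    intro x hx
    simp only [Metric.mem_ball, Real.dist_eq, sub_zero]
    rw [abs_of_nonneg hx.1]
    exact lt_of_le_of_lt hx.2 ht₀δ
  have hcont : ContinuousOn φ (Icc (0:ℝ) t₀) := by
    intro x hx
    exact ((hball (by simpa [Real.dist_eq, abs_of_nonneg hx.1] using lt_of_le_of_lt hx.2 ht₀δ)).1).continuousAt.continuousWithinAt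
  have hmono : StrictMonoOn φ (Icc (0:ℝ) t₀) := by
    apply strictMonoOn_of_deriv_pos (convex_Icc _ _) hcont
    intro x hx
    rw [interior_Icc] at hx
    have hd : HasDerivAt φ (φ' x) x := (hball (by
      simp only [Real.dist_eq, sub_zero]
      rw [abs_of_nonneg (le_of_lt hx.1)]
      exact lt_trans hx.2 ht₀δ)).1
    rw [hd.deriv]
    exact hIoo ⟨hx.1, lt_trans hx.2 ht₀u⟩
  have hlt : φ 0 < φ t₀ := hmono ⟨le_rfl, le_of_lt ht₀pos⟩ ⟨le_of_lt ht₀pos, le_rfl⟩ ht₀pos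
  have hle : φ t₀ ≤ φ 0 := (hball (by
    simp only [Real.dist_eq, sub_zero]
    rw [abs_of_nonneg (le_of_lt ht₀pos)]
    exact ht₀δ)).2
  linarith

lemma smul_line_re (z w : ℂ) (t : ℝ) : (z + t • w).re = z.re + t * w.re := by
  simp [Complex.add_re, Complex.smul_re]

lemma smul_line_im (z w : ℂ) (t : ℝ) : (z + t • w).im = z.im + t * w.im := by
  simp [Complex.add_im, Complex.smul_im]

lemma cdd_logabs (z w : ℂ) (hz : z ≠ 0) :
    cdd logabs z w =
      ((2*w.re*w.re + 2*w.im*w.im) * ((z.re)^2 + (z.im)^2)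
        - (2*z.re*w.re + 2*z.im*w.im) * (2*z.re*w.re + 2*z.im*w.im))
        / ((z.re)^2 + (z.im)^2)^2 / 2 := by
  set Q : ℝ → ℝ := fun t => (z.re + t*w.re)^2 + (z.im + t*w.im)^2 with hQdef
  set Q' : ℝ → ℝ := fun t => 2*(z.re + t*w.re)*w.re + 2*(z.im + t*w.im)*w.im with hQ'def
  have hre : ∀ t : ℝ, HasDerivAt (fun t : ℝ => z.re + t*w.re) w.re t := fun t => by
    simpa using ((hasDerivAt_id t).mul_const w.re).const_add z.re
  have him : ∀ t : ℝ, HasDerivAt (fun t : ℝ => z.im + t*w.im) w.im t := fun t => by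
    simpa using ((hasDerivAt_id t).mul_const w.im).const_add z.im
  have hQ : ∀ t : ℝ, HasDerivAt Q (Q' t) t := by
    intro t
    have h1 := ((hre t).pow 2).add ((him t).pow 2)
    refine h1.congr_deriv ?_
    simp only [hQ'def]
    push_cast
    ring
  have hQ' : HasDerivAt Q' (2*w.re*w.re + 2*w.im*w.im) 0 := by
    have h1 := (((hre 0).const_mul 2).mul_const w.re).add (((him 0).const_mul 2).mul_const w.im)
    exact h1
  have hQeq : ∀ t : ℝ, Q t = Complex.normSq (z + t • w) := by
    intro t
    rw [Complex.normSq_apply, smul_line_re, smul_line_im]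
    simp only [hQdef]
    ring
  have hQ0 : Q 0 ≠ 0 := by
    rw [hQeq 0]
    simpa [Complex.normSq_eq_zero] using hz
  have hQ0' : Q 0 = (z.re)^2 + (z.im)^2 := by
    simp only [hQdef]
    ring_nf
  set ψ : ℝ → ℝ := fun t => Q' t / Q t / 2 with hψdef
  have hψ0 : HasDerivAt ψ
      (((2*w.re*w.re + 2*w.im*w.im) * Q 0 - Q' 0 * Q' 0) / (Q 0)^2 / 2) 0 :=
    ((hQ'.div (hQ 0) hQ0)).div_const 2
  have hlineC : Continuous (fun s : ℝ => z + s • w) := by continuity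
  have hmem : ∀ᶠ t : ℝ in 𝓝 (0:ℝ), (z + t • w) ∈ ({(0:ℂ)}ᶜ : Set ℂ) := by
    have h := hlineC.continuousAt (x := (0:ℝ))
    exact h.eventually_mem (by
      simpa using isOpen_compl_singleton.mem_nhds
        (show z ∈ ({(0:ℂ)}ᶜ : Set ℂ) from hz))
  have hφψ : ∀ᶠ t : ℝ in 𝓝 (0:ℝ), HasDerivAt (fun s : ℝ => logabs (z + s • w)) (ψ t) t := by
    filter_upwards [hmem] with t ht
    have hQt : Q t ≠ 0 := by
      rw [hQeq t]
      simpa [Complex.normSq_eq_zero] using ht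
    have hlog : HasDerivAt (fun s : ℝ => Real.log (Q s) / 2) (Q' t / Q t / 2) t :=
      ((hQ t).log hQt).div_const 2
    have hfun : (fun s : ℝ => logabs (z + s • w)) = fun s : ℝ => Real.log (Q s) / 2 := by
      funext s
      rw [logabs_eq]
      simp only
      rw [hQeq s]
    rw [hfun]
    exact hlog
  obtain ⟨HA, hev⟩ := kl (isOpen_compl_singleton (x := (0:ℂ))) contDiffOn_logabs
    (show z ∈ ({(0:ℂ)}ᶜ : Set ℂ) from hz) w
  have heq : (fun t : ℝ => fderiv ℝ logabs (z + t • w) w) =ᶠ[𝓝 (0:ℝ)] ψ := by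
    filter_upwards [hev, hφψ] with t h1 h2
    exact h1.unique h2
  have HAψ : HasDerivAt ψ (cdd logabs z w) 0 := HA.congr_of_eventuallyEq heq.symm
  have hval := HAψ.unique hψ0
  rw [hval, hQ0']
  have hQ'0 : Q' 0 = 2*z.re*w.re + 2*z.im*w.im := by
    simp only [hQ'def]
    ring_nf
  rw [hQ'0]

lemma lap_logabs (z : ℂ) (hz : z ≠ 0) : cdd logabs z 1 + cdd logabs z Complex.I = 0 := by
  rw [cdd_logabs z 1 hz, cdd_logabs z Complex.I hz]
  have hns : (z.re)^2 + (z.im)^2 ≠ 0 := by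
    have h : Complex.normSq z ≠ 0 := by simpa [Complex.normSq_eq_zero] using hz
    rw [Complex.normSq_apply] at h
    intro hcon
    apply h
    nlinarith [hcon]
  simp only [Complex.one_re, Complex.one_im, Complex.I_re, Complex.I_im]
  field_simp
  ring

/-- If `u + ε·log|·|` has a local max at `z₀ ≠ 0` and `u` is smooth off `0`,
then `lap u z₀ ≤ 0`. -/
lemma lap_nonpos_at_max {u : ℂ → ℝ} (hu : ContDiffOn ℝ (⊤ : ℕ∞) u {(0:ℂ)}ᶜ)
    {ε : ℝ} {z₀ : ℂ} (hz₀ : z₀ ≠ 0)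
    (hmax : IsLocalMax (fun w => u w + ε * logabs w) z₀) :
    lap u z₀ ≤ 0 := by
  have hz₀' : z₀ ∈ ({(0:ℂ)}ᶜ : Set ℂ) := hz₀
  have key : ∀ w : ℂ, cdd u z₀ w + ε * cdd logabs z₀ w ≤ 0 := by
    intro w
    obtain ⟨HAu, hevu⟩ := kl (isOpen_compl_singleton (x := (0:ℂ))) hu hz₀' w
    obtain ⟨HAl, hevl⟩ := kl (isOpen_compl_singleton (x := (0:ℂ))) contDiffOn_logabs hz₀' w
    have h1 : ∀ᶠ t : ℝ in 𝓝 0, HasDerivAt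
        (fun s : ℝ => u (z₀ + s • w) + ε * logabs (z₀ + s • w))
        (fderiv ℝ u (z₀ + t • w) w + ε * fderiv ℝ logabs (z₀ + t • w) w) t := by
      filter_upwards [hevu, hevl] with t ht1 ht2
      exact ht1.add (ht2.const_mul ε)
    have h2 : HasDerivAt
        (fun t : ℝ => fderiv ℝ u (z₀ + t • w) w + ε * fderiv ℝ logabs (z₀ + t • w) w)
        (cdd u z₀ w + ε * cdd logabs z₀ w) 0 := HAu.add (HAl.const_mul ε)
    have hlineC : Continuous (fun s : ℝ => z₀ + s • w) := by continuity
    have hmax' : ∀ᶠ t : ℝ in 𝓝 (0:ℝ),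
        (fun s : ℝ => u (z₀ + s • w) + ε * logabs (z₀ + s • w)) t ≤
        (fun s : ℝ => u (z₀ + s • w) + ε * logabs (z₀ + s • w)) 0 := by
      have htend : Tendsto (fun s : ℝ => z₀ + s • w) (𝓝 0) (𝓝 z₀) := by
        have h := hlineC.continuousAt (x := (0:ℝ))
        rw [ContinuousAt] at h
        rwa [show z₀ + (0:ℝ) • w = z₀ by simp] at h
      have := htend.eventually hmax
      filter_upwards [this] with t ht
      simpa using ht
    exact deriv2_nonpos h1 h2 hmax'
  have k1 := key 1
  have kI := key Complex.I
  have hsum := lap_logabs z₀ hz₀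
  rw [lap_eq_cdd]
  have h' : ε * cdd logabs z₀ 1 + ε * cdd logabs z₀ Complex.I = 0 := by
    rw [← mul_add, hsum, mul_zero]
  linarith

lemma tendsto_logabs_atBot : Tendsto logabs (𝓝[≠] (0:ℂ)) atBot := by
  have h1 : Tendsto (fun z : ℂ => ‖z‖) (𝓝[≠] (0:ℂ)) (𝓝[>] (0:ℝ)) := by
    apply tendsto_nhdsWithin_of_tendsto_nhds_of_eventually_within
    · have : Tendsto (fun z : ℂ => ‖z‖) (𝓝 (0:ℂ)) (𝓝 ‖(0:ℂ)‖) :=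
        continuous_norm.continuousAt
      simpa using this.mono_left nhdsWithin_le_nhds
    · filter_upwards [self_mem_nhdsWithin] with z hz
      exact norm_pos_iff.mpr hz
  exact Real.tendsto_log_nhdsGT_zero.comp h1

/-- Near 0, `f + ε log|·|` is eventually below any constant, provided
`f/log|·| → γ ≥ 0`. -/
lemma near_zero_bound {f : ℂ → ℝ} {γ : ℝ} (hγ : 0 ≤ γ)
    (hf : Tendsto (fun z : ℂ => f z / Real.log ‖z‖) (𝓝[≠] (0:ℂ)) (𝓝 γ))
    {ε : ℝ} (hε : 0 < ε) (C : ℝ) :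
    ∀ᶠ z in 𝓝[≠] (0:ℂ), f z + ε * logabs z ≤ C := by
  have hev1 : ∀ᶠ z in 𝓝[≠] (0:ℂ), logabs z ≤ -1 :=
    tendsto_logabs_atBot.eventually (eventually_le_atBot (-1))
  have hev2 : ∀ᶠ z in 𝓝[≠] (0:ℂ), -(ε/2) < f z / logabs z := by
    have : -(ε/2) < γ := by linarith
    exact hf.eventually (eventually_gt_nhds this)
  have hev3 : ∀ᶠ z in 𝓝[≠] (0:ℂ), logabs z ≤ 2*C/ε :=
    tendsto_logabs_atBot.eventually (eventually_le_atBot (2*C/ε))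
  filter_upwards [hev1, hev2, hev3] with z h1 h2 h3
  have hL0 : logabs z < 0 := lt_of_le_of_lt h1 (by norm_num)
  have hLne : logabs z ≠ 0 := ne_of_lt hL0
  have key : f z + ε * logabs z = (f z / logabs z + ε) * logabs z := by
    field_simp
  rw [key]
  have h4 : ε/2 ≤ f z / logabs z + ε := by linarith
  have h5 : (f z / logabs z + ε) * logabs z ≤ (ε/2) * logabs z :=
    mul_le_mul_of_nonpos_right h4 (le_of_lt hL0)
  have h6 : (ε/2) * logabs z ≤ (ε/2) * (2*C/ε) :=
    mul_le_mul_of_nonneg_left h3 (by linarith)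
  have h7 : (ε/2) * (2*C/ε) = C := by field_simp
  linarith

lemma atInfty_bound {f : ℂ → ℝ}
    (hf : Tendsto f (comap (fun z : ℂ => ‖z‖) atTop) (𝓝 0))
    {η : ℝ} (hη : 0 < η) : ∃ R : ℝ, ∀ w : ℂ, R ≤ ‖w‖ → f w < η := by
  have hs : f ⁻¹' (Iio η) ∈ comap (fun z : ℂ => ‖z‖) atTop :=
    hf (Iio_mem_nhds hη)
  obtain ⟨t, ht, hsub⟩ := Filter.mem_comap.1 hs
  obtain ⟨R, hR⟩ := mem_atTop_sets.1 ht
  exact ⟨R, fun w hw => hsub (hR _ hw)⟩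
/-- In the equal-parameter case with nonnegative asymptotic data, any solution
is nonpositive. -/
theorem toda_solution_nonpositive (a γ₀ γ₁ : ℝ) (ha : 0 < a)
    (h0 : 0 ≤ γ₀) (h1 : 0 ≤ γ₁) (h2 : γ₁ ≤ 2 / a) (h3 : γ₀ - γ₁ ≤ 2)
    (u v : ℂ → ℝ) (hsol : IsTodaSol a a u v) (hasym : HasAsymData γ₀ γ₁ u v) :
    ∀ z : ℂ, z ≠ 0 → u z ≤ 0 ∧ v z ≤ 0 := by
  obtain ⟨hu_sm, hv_sm, hpde⟩ := hsol
  obtain ⟨huinf, hvinf, hu0, hv0⟩ := hasym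
  intro zs hzs
  have main : ∀ η : ℝ, 0 < η → max (u zs) (v zs) ≤ η := by
    intro η hη
    obtain ⟨R₁, hR₁⟩ := atInfty_bound huinf hη
    obtain ⟨R₂, hR₂⟩ := atInfty_bound hvinf hη
    set R : ℝ := max 1 (max (‖zs‖) (max R₁ R₂)) with hRdef
    have hR1 : 1 ≤ R := le_max_left _ _
    have hRz : ‖zs‖ ≤ R := le_trans (le_max_left _ _) (le_max_right _ _)
    have hRR₁ : R₁ ≤ R :=
      le_trans (le_trans (le_max_left _ _) (le_max_right _ _)) (le_max_right _ _)
    have hRR₂ : R₂ ≤ R :=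
      le_trans (le_trans (le_max_right _ _) (le_max_right _ _)) (le_max_right _ _)
    have hRpos : (0:ℝ) < R := lt_of_lt_of_le one_pos hR1
    have hlogzs : logabs zs ≤ Real.log R :=
      Real.log_le_log (norm_pos_iff.mpr hzs) hRz
    have hper : ∀ ε : ℝ, 0 < ε →
        max (u zs) (v zs) + ε * logabs zs ≤ η + ε * Real.log R := by
      intro ε hε
      set Fu : ℂ → ℝ := fun w => u w + ε * logabs w with hFu
      set Fv : ℂ → ℝ := fun w => v w + ε * logabs w with hFv
      set G : ℂ → ℝ := fun w => max (Fu w) (Fv w) with hG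
      set w₁ : ℂ := (R : ℂ) with hw₁def
      have habsw₁ : ‖w₁‖ = R := by
        rw [hw₁def, Complex.norm_real, Real.norm_eq_abs, abs_of_pos hRpos]
      have hw₁ne : w₁ ≠ 0 := by
        rw [hw₁def]
        exact_mod_cast Complex.ofReal_ne_zero.2 (ne_of_gt hRpos)
      have hnear : ∀ᶠ w in 𝓝[≠] (0:ℂ), G w ≤ G w₁ := by
        filter_upwards [near_zero_bound h0 hu0 hε (G w₁),
          near_zero_bound h1 hv0 hε (G w₁)] with w hwu hwv
        exact max_le hwu hwv
      rw [eventually_nhdsWithin_iff] at hnear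
      obtain ⟨δ, hδpos, hδ⟩ := Metric.eventually_nhds_iff.1 hnear
      set r : ℝ := min (δ/2) 1 with hrdef
      have hrpos : 0 < r := lt_min (by linarith) one_pos
      have hr1 : r ≤ 1 := min_le_right _ _
      set S : Set ℂ := Metric.closedBall (0:ℂ) R \ Metric.ball (0:ℂ) r with hSdef
      have hScomp : IsCompact S := (isCompact_closedBall (0:ℂ) R).diff Metric.isOpen_ball
      have hSsub : S ⊆ ({(0:ℂ)}ᶜ : Set ℂ) := by
        intro w hw
        intro h0'
        apply hw.2
        rw [Set.mem_singleton_iff] at h0'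
        rw [h0', Metric.mem_ball, dist_self]
        exact hrpos
      have hLcont : ContinuousOn logabs ({(0:ℂ)}ᶜ : Set ℂ) := contDiffOn_logabs.continuousOn
      have hFucont : ContinuousOn Fu ({(0:ℂ)}ᶜ : Set ℂ) :=
        hu_sm.continuousOn.add (continuousOn_const.mul hLcont)
      have hFvcont : ContinuousOn Fv ({(0:ℂ)}ᶜ : Set ℂ) :=
        hv_sm.continuousOn.add (continuousOn_const.mul hLcont)
      have hGcont : ContinuousOn G S := (hFucont.mono hSsub).sup (hFvcont.mono hSsub)
      have hw₁S : w₁ ∈ S := by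
        constructor
        · rw [Metric.mem_closedBall, Complex.dist_eq, sub_zero, habsw₁]
        · rw [Metric.mem_ball, Complex.dist_eq, sub_zero, habsw₁]
          intro hcon
          linarith
      obtain ⟨z₀, hz₀S, hz₀max⟩ := hScomp.exists_isMaxOn ⟨w₁, hw₁S⟩ hGcont
      have hz₀ne : z₀ ≠ 0 := hSsub hz₀S
      have hz₀absR : ‖z₀‖ ≤ R := by
        have h := hz₀S.1
        rwa [Metric.mem_closedBall, Complex.dist_eq, sub_zero] at h
      have hglobal : ∀ w : ℂ, w ≠ 0 → ‖w‖ ≤ R → G w ≤ G z₀ := by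
        intro w hwne hwR
        by_cases hcase : ‖w‖ < r
        · have hd : dist w 0 < δ := by
            rw [Complex.dist_eq, sub_zero]
            have : r ≤ δ/2 := min_le_left _ _
            linarith
          exact le_trans (hδ hd hwne) (hz₀max hw₁S)
        · refine hz₀max ⟨?_, ?_⟩
          · rw [Metric.mem_closedBall, Complex.dist_eq, sub_zero]; exact hwR
          · rw [Metric.mem_ball, Complex.dist_eq, sub_zero]; exact hcase
      have hGz₀ : G z₀ ≤ η + ε * Real.log R := by
        by_cases hint : ‖z₀‖ < R
        · have hUopen : IsOpen {w : ℂ | w ≠ 0 ∧ ‖w‖ < R} := by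
            have h1 : IsOpen ({(0:ℂ)}ᶜ : Set ℂ) := isOpen_compl_singleton
            have h2 : IsOpen ((fun w : ℂ => ‖w‖) ⁻¹' (Iio R)) :=
              isOpen_Iio.preimage continuous_norm
            exact h1.inter h2
          have hz₀U : z₀ ∈ {w : ℂ | w ≠ 0 ∧ ‖w‖ < R} := ⟨hz₀ne, hint⟩
          have hlog₀ : ε * logabs z₀ ≤ ε * Real.log R :=
            mul_le_mul_of_nonneg_left
              (Real.log_le_log (norm_pos_iff.mpr hz₀ne) hz₀absR) (le_of_lt hε)
          by_cases huv : Fv z₀ ≤ Fu z₀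
          · have hloc : IsLocalMax Fu z₀ := by
              filter_upwards [hUopen.mem_nhds hz₀U] with w hw
              calc Fu w ≤ G w := le_max_left _ _
                _ ≤ G z₀ := hglobal w hw.1 (le_of_lt hw.2)
                _ = Fu z₀ := max_eq_left huv
            have hlap : lap u z₀ ≤ 0 := lap_nonpos_at_max hu_sm hz₀ne hloc
            rw [(hpde z₀ hz₀ne).1] at hlap
            have hexp : Real.exp (a * u z₀) ≤ Real.exp (v z₀ - u z₀) := by linarith
            have hau : a * u z₀ ≤ v z₀ - u z₀ := Real.exp_le_exp.1 hexp
            have hvu : v z₀ ≤ u z₀ := by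
              have h := huv
              rw [hFu, hFv] at h
              simp only at h
              linarith
            have hu0' : u z₀ ≤ 0 := by nlinarith
            have hGeq : G z₀ = Fu z₀ := max_eq_left huv
            rw [hGeq, hFu]
            simp only
            linarith
          · push_neg at huv
            have hloc : IsLocalMax Fv z₀ := by
              filter_upwards [hUopen.mem_nhds hz₀U] with w hw
              calc Fv w ≤ G w := le_max_right _ _
                _ ≤ G z₀ := hglobal w hw.1 (le_of_lt hw.2)
                _ = Fv z₀ := max_eq_right (le_of_lt huv)
            have hlap : lap v z₀ ≤ 0 := lap_nonpos_at_max hv_sm hz₀ne hloc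
            rw [(hpde z₀ hz₀ne).2] at hlap
            have hexp : Real.exp (v z₀ - u z₀) ≤ Real.exp (-(a * v z₀)) := by linarith
            have hvau : v z₀ - u z₀ ≤ -(a * v z₀) := Real.exp_le_exp.1 hexp
            have huv' : u z₀ ≤ v z₀ := by
              have h := le_of_lt huv
              rw [hFu, hFv] at h
              simp only at h
              linarith
            have hv0' : v z₀ ≤ 0 := by nlinarith
            have hGeq : G z₀ = Fv z₀ := max_eq_right (le_of_lt huv)
            rw [hGeq, hFv]
            simp only
            linarith
        · have habs : ‖z₀‖ = R := le_antisymm hz₀absR (not_lt.1 hint)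
          have hu' : u z₀ < η := hR₁ z₀ (by rw [habs]; exact hRR₁)
          have hv' : v z₀ < η := hR₂ z₀ (by rw [habs]; exact hRR₂)
          have hlogz₀ : logabs z₀ = Real.log R := by rw [logabs, habs]
          have hGeq : G z₀ = max (u z₀) (v z₀) + ε * logabs z₀ := by
            rw [hG, hFu, hFv]
            simp only
            rw [max_add_add_right]
          rw [hGeq, hlogz₀]
          have hm : max (u z₀) (v z₀) ≤ η := max_le (le_of_lt hu') (le_of_lt hv')
          linarith
      have hzsG : G zs ≤ G z₀ := hglobal zs hzs hRz
      have hGzs : max (u zs) (v zs) + ε * logabs zs = G zs := by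
        rw [hG, hFu, hFv]
        simp only
        rw [max_add_add_right]
      linarith
    set Cc : ℝ := Real.log R - logabs zs with hCcdef
    have hCc0 : 0 ≤ Cc := by simp only [hCcdef]; linarith
    have hstep : ∀ ε : ℝ, 0 < ε → max (u zs) (v zs) - ε ≤ η := by
      intro ε hε'
      have h := hper (ε / (Cc + 1)) (by positivity)
      have hring : (ε / (Cc + 1)) * Real.log R - (ε / (Cc + 1)) * logabs zs
          = (ε / (Cc + 1)) * Cc := by rw [hCcdef]; ring
      have hCle : (ε / (Cc + 1)) * Cc ≤ ε := by
        rw [div_mul_eq_mul_div, div_le_iff₀ (by linarith)]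
        nlinarith
      linarith
    exact le_of_forall_sub_le hstep
  have hmax0 : max (u zs) (v zs) ≤ 0 := by
    apply le_of_forall_sub_le
    intro ε hε
    have := main ε hε
    linarith
  exact ⟨le_trans (le_max_left _ _) hmax0, le_trans (le_max_right _ _) hmax0⟩
end
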